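/- Define the sequence of real polynomials a_k by a_0(x) = x² and a_{k+1}(x) = a_k''(x) + (d/dx)(x·a_k(x)). Let 0 < α < 1 and let κ, x be real numbers and t ≥ 0. Then the series solution of the Hilfer advection-diffusion problem with initial condition c(x,0) = x² has the closed form ∑_{k=0}^∞ a_k(x) · κ^k · t^{k(1−α)} / Γ(k(1−α)+1) = x² · E_{1−α}(3κ t^{1−α}) + E_{1−α}(3κ t^{1−α}) − E_{1−α}(κ t^{1−α}), where E_μ(z) = ∑_{k=0}^∞ z^k / Γ(μk + 1). -/

import Mathlib

open Real Polynomial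

lemma ml_summable {μ : ℝ} (hμ : 0 < μ) (z : ℝ) :
    Summable (fun k : ℕ => z ^ k / Real.Gamma ((k : ℝ) * μ + 1)) := by
  set B : ℝ := max 1 |z| with hB
  have hB1 : (1:ℝ) ≤ B := le_max_left _ _
  set M : ℕ := ⌈1/μ⌉₊ with hM
  set C : ℝ := B ^ M with hC
  have hC1 : (1:ℝ) ≤ C := one_le_pow₀ hB1
  have hC0 : (0:ℝ) < C := lt_of_lt_of_le one_pos hC1
  set A : ℝ := Real.exp (2*C) with hA
  have hA0 : (0:ℝ) < A := Real.exp_pos _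
  set r : ℝ := (2:ℝ) ^ (-μ) with hr
  have hr0 : 0 < r := Real.rpow_pos_of_pos two_pos _
  have hr1 : r < 1 := Real.rpow_lt_one_of_one_lt_of_neg one_lt_two (neg_neg_iff_pos.mpr hμ)
  set K : ℝ := 2 * C * A with hK
  -- the key pointwise bound
  have hbound : ∀ k : ℕ, 2 ≤ μ * k → |z ^ k / Real.Gamma ((k : ℝ) * μ + 1)| ≤ K * r ^ k := by
    intro k hk
    set n : ℕ := ⌊μ * k⌋₊ with hn
    have hn2 : 2 ≤ n := Nat.le_floor (by exact_mod_cast hk)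
    have hfloor_le : (n : ℝ) ≤ μ * k := Nat.floor_le (by positivity)
    have hlt : μ * k < n + 1 := Nat.lt_floor_add_one _
    have hGpos : 0 < Real.Gamma ((k : ℝ) * μ + 1) :=
      Real.Gamma_pos_of_pos (by positivity)
    -- Gamma lower bound by factorial
    have hGamma_ge : (n.factorial : ℝ) ≤ Real.Gamma ((k : ℝ) * μ + 1) := by
      rw [← Real.Gamma_nat_eq_factorial]
      apply (Real.Gamma_strictMonoOn_Ici.monotoneOn)
      · simp only [Set.mem_Ici]
        have : (2:ℝ) ≤ (n:ℝ) := by exact_mod_cast hn2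
        linarith
      · simp only [Set.mem_Ici]; linarith [hk, mul_comm μ (k:ℝ)]
      · push_cast; rw [mul_comm]; linarith
    -- |z|^k ≤ C^(n+1)
    have hk_le : k ≤ M * (n + 1) := by
      have h1μ : 1/μ ≤ (M:ℝ) := Nat.le_ceil _
      have : (k:ℝ) < (M:ℝ) * (n + 1) := by
        have hklt : (k:ℝ) < (n+1) / μ := by
          rw [lt_div_iff₀ hμ]; rw [mul_comm]; push_cast at hlt ⊢; linarith
        calc (k:ℝ) < (n+1)/μ := hklt
          _ = (1/μ) * (n+1) := by ring
          _ ≤ (M:ℝ) * (n+1) := by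
              apply mul_le_mul_of_nonneg_right h1μ; positivity
      exact_mod_cast this.le
    have hz_le : |z| ^ k ≤ C * C ^ n := by
      calc |z| ^ k ≤ B ^ k := pow_le_pow_left₀ (abs_nonneg z) (le_max_right _ _) k
        _ ≤ B ^ (M * (n+1)) := pow_le_pow_right₀ hB1 hk_le
        _ = C ^ (n + 1) := by rw [hC, ← pow_mul]
        _ = C * C ^ n := by ring
    -- C^n / n! ≤ A / 2^n
    have hfact : (2*C) ^ n / n.factorial ≤ A := by
      have := Real.sum_le_exp_of_nonneg (by positivity : (0:ℝ) ≤ 2*C) (n+1)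
      refine le_trans ?_ this
      refine Finset.single_le_sum (f := fun i => (2*C)^i / i.factorial) ?_ (Finset.self_mem_range_succ n)
      intro i _; positivity
    have hCn : C ^ n / n.factorial ≤ A / 2 ^ n := by
      rw [div_le_div_iff₀ (by positivity) (by positivity)]
      have : (2*C)^n / n.factorial * (n.factorial : ℝ) ≤ A * n.factorial := by
        apply mul_le_mul_of_nonneg_right hfact (by positivity)
      rw [div_mul_cancel₀] at this
      · calc C ^ n * 2 ^ n = (2*C)^n := by rw [mul_pow]; ring
          _ ≤ A * n.factorial := by
            have h2 : ((2*C)^n / n.factorial) * (n.factorial : ℝ) = (2*C)^n := by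
              rw [div_mul_cancel₀]; positivity
            linarith
      · positivity
    -- 2^n ≥ 2^(μk - 1)
    have h2n : (2:ℝ) ^ (μ * k - 1) ≤ 2 ^ n := by
      rw [← Real.rpow_natCast 2 n]
      apply Real.rpow_le_rpow_left_iff (x := 2) one_lt_two |>.mpr
      linarith
    have h2pos : (0:ℝ) < (2:ℝ) ^ (μ * k - 1) := Real.rpow_pos_of_pos two_pos _
    have hKr : A / (2:ℝ) ^ (μ * k - 1) = 2 * A * r ^ k := by
      rw [div_eq_mul_inv, ← Real.rpow_neg (by norm_num : (0:ℝ) ≤ 2)]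
      have : -(μ * k - 1) = 1 + (-μ) * k := by ring
      rw [this, Real.rpow_add two_pos, Real.rpow_one, hr,
        ← Real.rpow_natCast ((2:ℝ)^(-μ)) k, ← Real.rpow_mul (by norm_num)]
      ring
    calc |z ^ k / Real.Gamma ((k : ℝ) * μ + 1)|
        = |z| ^ k / Real.Gamma ((k : ℝ) * μ + 1) := by
          rw [abs_div, abs_pow, abs_of_pos hGpos]
      _ ≤ (C * C ^ n) / (n.factorial : ℝ) := by
          apply div_le_div₀ (by positivity) hz_le (by positivity) hGamma_ge
      _ = C * (C ^ n / n.factorial) := by ring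
      _ ≤ C * (A / 2 ^ n) := by
          apply mul_le_mul_of_nonneg_left hCn (le_of_lt hC0)
      _ ≤ C * (A / (2:ℝ) ^ (μ * k - 1)) := by
          apply mul_le_mul_of_nonneg_left _ (le_of_lt hC0)
          exact div_le_div_of_nonneg_left hA0.le h2pos h2n
      _ = K * r ^ k := by rw [hKr, hK]; ring
  -- reduce to a tail
  set k0 : ℕ := ⌈2/μ⌉₊ with hk0
  rw [← summable_nat_add_iff k0]
  have hgeo : Summable (fun k : ℕ => (K * r ^ k0) * r ^ k) :=
    (summable_geometric_of_lt_one hr0.le hr1).mul_left _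
  apply Summable.of_norm_bounded hgeo
  intro k
  have hk2 : 2 ≤ μ * (k + k0 : ℕ) := by
    have h2μ : 2/μ ≤ (k0:ℝ) := Nat.le_ceil _
    have : (k0 : ℝ) ≤ ((k + k0 : ℕ) : ℝ) := by push_cast; linarith [Nat.cast_nonneg (α := ℝ) k]
    calc (2:ℝ) = μ * (2/μ) := by field_simp
      _ ≤ μ * k0 := by apply mul_le_mul_of_nonneg_left h2μ hμ.le
      _ ≤ μ * ((k + k0 : ℕ) : ℝ) := by apply mul_le_mul_of_nonneg_left this hμ.le
  calc ‖z ^ (k + k0) / Real.Gamma (((k + k0 : ℕ) : ℝ) * μ + 1)‖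
      ≤ K * r ^ (k + k0) := hbound _ hk2
    _ = (K * r ^ k0) * r ^ k := by rw [pow_add]; ring
open Real Polynomial

lemma a_closed (a : ℕ → Polynomial ℝ)
    (ha0 : a 0 = Polynomial.X ^ 2)
    (harec : ∀ k, a (k + 1) =
      Polynomial.derivative (Polynomial.derivative (a k)) +
        Polynomial.derivative (Polynomial.X * a k)) (k : ℕ) :
    a k = Polynomial.C ((3:ℝ)^k) * Polynomial.X ^ 2 + Polynomial.C ((3:ℝ)^k - 1) := by
  induction k with
  | zero => simp [ha0]
  | succ k ih =>
    have h3 : (Polynomial.C (3:ℝ)) = 3 := map_ofNat Polynomial.C 3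
    rw [harec k, ih]
    simp [derivative_mul, derivative_pow, pow_succ, h3]
    ring

/-- Closed form of the series solution for initial condition `c(x,0) = x²`: with
`a_0(x) = x²`, `a_{k+1} = a_k'' + (x·a_k)'`, `0 < α < 1`, `t ≥ 0`,
`∑_k a_k(x) κ^k t^{k(1−α)} / Γ(k(1−α)+1)
  = x² E_{1−α}(3κ t^{1−α}) + E_{1−α}(3κ t^{1−α}) − E_{1−α}(κ t^{1−α})`,
where `E_{1−α}(z) = ∑_k z^k / Γ(k(1−α)+1)`. -/
theorem vim_solution_p_two_mittag_leffler (a : ℕ → Polynomial ℝ)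
    (ha0 : a 0 = Polynomial.X ^ 2)
    (harec : ∀ k, a (k + 1) =
      Polynomial.derivative (Polynomial.derivative (a k)) +
        Polynomial.derivative (Polynomial.X * a k))
    (α κ x t : ℝ) (hα0 : 0 < α) (hα1 : α < 1) (ht : 0 ≤ t) :
    ∑' k : ℕ, (a k).eval x * κ ^ k * t ^ ((k : ℝ) * (1 - α)) /
        Real.Gamma ((k : ℝ) * (1 - α) + 1) =
      x ^ 2 * (∑' k : ℕ, (3 * κ * t ^ (1 - α)) ^ k / Real.Gamma ((k : ℝ) * (1 - α) + 1)) +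
        (∑' k : ℕ, (3 * κ * t ^ (1 - α)) ^ k / Real.Gamma ((k : ℝ) * (1 - α) + 1)) -
        (∑' k : ℕ, (κ * t ^ (1 - α)) ^ k / Real.Gamma ((k : ℝ) * (1 - α) + 1)) := by
  have hμ : (0:ℝ) < 1 - α := by linarith
  have hS3 : Summable (fun k : ℕ =>
      (3 * κ * t ^ (1 - α)) ^ k / Real.Gamma ((k : ℝ) * (1 - α) + 1)) :=
    ml_summable hμ _
  have hS1 : Summable (fun k : ℕ =>
      (κ * t ^ (1 - α)) ^ k / Real.Gamma ((k : ℝ) * (1 - α) + 1)) :=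
    ml_summable hμ _
  have hterm : ∀ k : ℕ,
      (a k).eval x * κ ^ k * t ^ ((k : ℝ) * (1 - α)) / Real.Gamma ((k : ℝ) * (1 - α) + 1) =
        (x ^ 2 + 1) * ((3 * κ * t ^ (1 - α)) ^ k / Real.Gamma ((k : ℝ) * (1 - α) + 1)) -
          (κ * t ^ (1 - α)) ^ k / Real.Gamma ((k : ℝ) * (1 - α) + 1) := by
    intro k
    have hrp : t ^ ((k : ℝ) * (1 - α)) = (t ^ (1 - α)) ^ k := by
      rw [mul_comm, Real.rpow_mul ht, Real.rpow_natCast]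
    rw [a_closed a ha0 harec k, hrp]
    simp only [Polynomial.eval_add, Polynomial.eval_mul, Polynomial.eval_C,
      Polynomial.eval_pow, Polynomial.eval_X]
    ring
  calc ∑' k : ℕ, (a k).eval x * κ ^ k * t ^ ((k : ℝ) * (1 - α)) /
        Real.Gamma ((k : ℝ) * (1 - α) + 1)
      = ∑' k : ℕ, ((x ^ 2 + 1) * ((3 * κ * t ^ (1 - α)) ^ k /
          Real.Gamma ((k : ℝ) * (1 - α) + 1)) -
          (κ * t ^ (1 - α)) ^ k / Real.Gamma ((k : ℝ) * (1 - α) + 1)) := tsum_congr hterm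
    _ = (x ^ 2 + 1) * (∑' k : ℕ, (3 * κ * t ^ (1 - α)) ^ k /
          Real.Gamma ((k : ℝ) * (1 - α) + 1)) -
          ∑' k : ℕ, (κ * t ^ (1 - α)) ^ k / Real.Gamma ((k : ℝ) * (1 - α) + 1) := by
        rw [Summable.tsum_sub (hS3.mul_left _) hS1, tsum_mul_left]
    _ = _ := by ring
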